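/- arXiv:1205.1580 — 3 statements merged into one kernel-verified Lean document; each statement's English description precedes it below -/
import Mathlib

section
/- Let f, g be convex functions on ℝ^d, Q an orthogonal d×d matrix, x₀, y₀ ∈ ℝ^d, and z₀ = x₀ + Q y₀. Then (x₀, y₀) is the unique optimal point of the problem: minimize f(x) subject to g(y) ≤ g(y₀) and x + Qy = z₀, if and only if F(f, x₀) ∩ (−Q · F(g, y₀)) = {0}, where F denotes the feasible cone. -/
open Set

/-- The feasible cone of a convex function `f` at a point `x`:
`F(f,x) = ⋃_{λ>0} {δ : f(x + λδ) ≤ f(x)}`. -/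
def feasibleCone {E : Type*} [AddCommGroup E] [Module ℝ E] (f : E → ℝ) (x : E) : Set E :=
  ⋃ (t : ℝ) (_ : 0 < t), {δ | f (x + t • δ) ≤ f x}

lemma mem_feasibleCone {E : Type*} [AddCommGroup E] [Module ℝ E] {f : E → ℝ} {x δ : E} :
    δ ∈ feasibleCone f x ↔ ∃ t : ℝ, 0 < t ∧ f (x + t • δ) ≤ f x := by
  simp [feasibleCone, exists_prop]

lemma cone_shrink {E : Type*} [AddCommGroup E] [Module ℝ E] {f : E → ℝ}
    (hf : ConvexOn ℝ Set.univ f) {x δ : E} {s t : ℝ} (ht : 0 < t) (hts : t ≤ s)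
    (h : f (x + s • δ) ≤ f x) : f (x + t • δ) ≤ f x := by
  have hs : 0 < s := lt_of_lt_of_le ht hts
  have hb : (0:ℝ) ≤ t / s := le_of_lt (div_pos ht hs)
  have hb1 : t / s ≤ 1 := (div_le_one hs).mpr hts
  have ha : (0:ℝ) ≤ 1 - t / s := by linarith
  have hab : (1 - t / s) + t / s = 1 := by ring
  have key := hf.2 (mem_univ x) (mem_univ (x + s • δ)) ha hb hab
  have hpt : (1 - t / s) • x + (t / s) • (x + s • δ) = x + t • δ := by
    rw [smul_add, smul_smul]
    rw [div_mul_cancel₀ _ (ne_of_gt hs)]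
    module
  rw [hpt] at key
  calc f (x + t • δ) ≤ (1 - t / s) * f x + (t / s) * f (x + s • δ) := key
    _ ≤ (1 - t / s) * f x + (t / s) * f x := by nlinarith
    _ = f x := by ring

/-- Geometric characterization of success of the convex demixing method:
`(x₀, y₀)` is the unique optimal point of `min f(x) s.t. g(y) ≤ g(y₀), x + Qy = z₀`
if and only if `F(f, x₀) ∩ (−Q F(g, y₀)) = {0}`. -/
theorem stmt3 {d : ℕ} (f g : EuclideanSpace ℝ (Fin d) → ℝ)
    (hf : ConvexOn ℝ Set.univ f) (hg : ConvexOn ℝ Set.univ g)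
    (Q : EuclideanSpace ℝ (Fin d) ≃ₗᵢ[ℝ] EuclideanSpace ℝ (Fin d))
    (x₀ y₀ z₀ : EuclideanSpace ℝ (Fin d)) (hz : z₀ = x₀ + Q y₀) :
    (∀ x y : EuclideanSpace ℝ (Fin d),
        x + Q y = z₀ → g y ≤ g y₀ → (x, y) ≠ (x₀, y₀) → f x₀ < f x)
      ↔ feasibleCone f x₀ ∩ ((fun v => -(Q v)) '' feasibleCone g y₀) = {0} := by
  constructor
  · intro H
    apply Subset.antisymm
    · rintro δ ⟨hδf, ε, hεg, hδε⟩
      by_contra hδ0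
      simp only [mem_singleton_iff] at hδ0
      obtain ⟨s, hs, hfs⟩ := mem_feasibleCone.mp hδf
      obtain ⟨t, ht, hgt⟩ := mem_feasibleCone.mp hεg
      set l := min s t with hl
      have hl0 : 0 < l := lt_min hs ht
      have hfl : f (x₀ + l • δ) ≤ f x₀ := cone_shrink hf hl0 (min_le_left s t) hfs
      have hgl : g (y₀ + l • ε) ≤ g y₀ := cone_shrink hg hl0 (min_le_right s t) hgt
      have hsum : (x₀ + l • δ) + Q (y₀ + l • ε) = z₀ := by
        rw [hz]
        have : Q (y₀ + l • ε) = Q y₀ + l • Q ε := by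
          rw [map_add, map_smul]
        rw [this]
        have : Q ε = -δ := by
          have := hδε
          simp only at this
          rw [← this, neg_neg]
        rw [this]
        module
      have hne : ((x₀ + l • δ, y₀ + l • ε) : _ × _) ≠ (x₀, y₀) := by
        intro h
        apply hδ0
        have h1 : x₀ + l • δ = x₀ := congrArg Prod.fst h
        have : l • δ = 0 := by
          have h2 : x₀ + l • δ = x₀ + 0 := by rw [add_zero]; exact h1
          exact add_left_cancel h2
        rcases smul_eq_zero.mp this with h | h
        · exact absurd h (ne_of_gt hl0)
        · exact h
      exact absurd hfl (not_le.mpr (H _ _ hsum hgl hne))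
    · rintro δ hδ
      simp only [mem_singleton_iff] at hδ
      subst hδ
      constructor
      · exact mem_feasibleCone.mpr ⟨1, one_pos, by simp⟩
      · exact ⟨0, mem_feasibleCone.mpr ⟨1, one_pos, by simp⟩, by simp⟩
  · intro H x y hsum hgy hne
    by_contra hlt
    push_neg at hlt
    set δ := x - x₀ with hδ
    set ε := y - y₀ with hε
    have hQε : -(Q ε) = δ := by
      have : (x - x₀) + Q (y - y₀) = 0 := by
        rw [map_sub]
        rw [hz] at hsum
        abel_nf
        linear_combination (norm := module) hsum
      rw [hε, hδ]
      linear_combination (norm := module) -this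
    have hδf : δ ∈ feasibleCone f x₀ :=
      mem_feasibleCone.mpr ⟨1, one_pos, by simpa [hδ] using hlt⟩
    have hεg : ε ∈ feasibleCone g y₀ :=
      mem_feasibleCone.mpr ⟨1, one_pos, by simpa [hε] using hgy⟩
    have hδ0 : δ = 0 := by
      have : δ ∈ ({0} : Set _) := by
        rw [← H]
        exact ⟨hδf, ε, hεg, hQε⟩
      simpa using this
    have hε0 : ε = 0 := by
      have : Q ε = 0 := by
        have := hQε
        rw [hδ0] at this
        simpa [neg_eq_zero] using this
      simpa using Q.injective (by simpa using this)
    apply hne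
    have hx : x = x₀ := by
      have := sub_eq_zero.mp hδ0
      exact this
    have hy : y = y₀ := sub_eq_zero.mp hε0
    rw [hx, hy]
end

section
/- For every θ ∈ [0,1], (1/d) · log(binomial(d, ⌈θd⌉)) converges to H(θ) = −θ log θ − (1−θ) log(1−θ) as d → ∞, and the convergence is uniform in θ over [0,1]. -/
open Real Filter Finset

namespace Stmt9Aux

/-- term `a j = C(d,j) k^j (d-k)^(d-j)` -/
def a (d k j : ℕ) : ℕ := d.choose j * k ^ j * (d - k) ^ (d - j)

lemma step_up {d k j : ℕ} (hk : k ≤ d) (hj : j < k) : a d k j ≤ a d k (j + 1) := by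
  have hjd : j < d := lt_of_lt_of_le hj hk
  have h1 : d - j = (d - (j + 1)) + 1 := by omega
  have h2 : d.choose (j + 1) * (j + 1) = d.choose j * (d - j) := Nat.choose_succ_right_eq d j
  have key : (j + 1) * (d - k) ≤ (d - j) * k := by
    calc (j + 1) * (d - k) ≤ k * (d - j) := Nat.mul_le_mul (by omega) (by omega)
      _ = (d - j) * k := Nat.mul_comm _ _
  apply Nat.le_of_mul_le_mul_left _ (Nat.succ_pos j)
  calc (j + 1) * a d k j
      = (d.choose j * k ^ j * (d - k) ^ (d - (j + 1))) * ((j + 1) * (d - k)) := by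
        unfold a; rw [h1, pow_succ]; ring
    _ ≤ (d.choose j * k ^ j * (d - k) ^ (d - (j + 1))) * ((d - j) * k) :=
        Nat.mul_le_mul_left _ key
    _ = (d.choose j * (d - j)) * (k ^ j * k) * (d - k) ^ (d - (j + 1)) := by ring
    _ = (d.choose (j + 1) * (j + 1)) * k ^ (j + 1) * (d - k) ^ (d - (j + 1)) := by
        rw [h2, pow_succ]
    _ = (j + 1) * a d k (j + 1) := by unfold a; ring

lemma step_down {d k j : ℕ} (hk : k ≤ j) (hjd : j < d) : a d k (j + 1) ≤ a d k j := by
  have h1 : d - j = (d - (j + 1)) + 1 := by omega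
  have h2 : d.choose (j + 1) * (j + 1) = d.choose j * (d - j) := Nat.choose_succ_right_eq d j
  have key : (d - j) * k ≤ (j + 1) * (d - k) := by
    calc (d - j) * k ≤ (d - k) * (j + 1) := Nat.mul_le_mul (by omega) (by omega)
      _ = (j + 1) * (d - k) := Nat.mul_comm _ _
  apply Nat.le_of_mul_le_mul_left _ (Nat.succ_pos j)
  calc (j + 1) * a d k (j + 1)
      = (d.choose (j + 1) * (j + 1)) * k ^ (j + 1) * (d - k) ^ (d - (j + 1)) := by
        unfold a; ring
    _ = (d.choose j * (d - j)) * (k ^ j * k) * (d - k) ^ (d - (j + 1)) := by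
        rw [h2, pow_succ]
    _ = (d.choose j * k ^ j * (d - k) ^ (d - (j + 1))) * ((d - j) * k) := by ring
    _ ≤ (d.choose j * k ^ j * (d - k) ^ (d - (j + 1))) * ((j + 1) * (d - k)) :=
        Nat.mul_le_mul_left _ key
    _ = (j + 1) * a d k j := by unfold a; rw [h1, pow_succ]; ring

lemma le_max_term {d k : ℕ} (hk : k ≤ d) : ∀ j, j ≤ d → a d k j ≤ a d k k := by
  have up : ∀ m, a d k (k - m) ≤ a d k k := by
    intro m
    induction m with
    | zero => simp
    | succ m ih =>
      rcases le_or_gt k m with h | h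
      · have : k - (m + 1) = k - m := by omega
        rw [this]; exact ih
      · have h1 : k - (m + 1) < k := by omega
        have := step_up hk h1
        have h2 : k - (m + 1) + 1 = k - m := by omega
        rw [h2] at this
        exact this.trans ih
  have down : ∀ m, k + m ≤ d → a d k (k + m) ≤ a d k k := by
    intro m
    induction m with
    | zero => simp
    | succ m ih =>
      intro h
      have h1 : k + m < d := by omega
      have := step_down (Nat.le_add_right k m) h1
      exact this.trans (ih (by omega))
  intro j hj
  rcases le_or_gt j k with h | h
  · have : j = k - (k - j) := by omega
    rw [this]; exact up _
  · have : j = k + (j - k) := by omega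
    rw [this]; exact down _ (by omega)

lemma sum_terms {d k : ℕ} (hk : k ≤ d) :
    d ^ d = ∑ j ∈ range (d + 1), a d k j := by
  have h : k + (d - k) = d := by omega
  calc d ^ d = (k + (d - k)) ^ d := by rw [h]
    _ = ∑ j ∈ range (d + 1), k ^ j * (d - k) ^ (d - j) * d.choose j := add_pow k (d - k) d
    _ = ∑ j ∈ range (d + 1), a d k j := by
        refine Finset.sum_congr rfl fun j _ => ?_
        unfold a; ring

lemma pow_le_card_mul {d k : ℕ} (hk : k ≤ d) : d ^ d ≤ (d + 1) * a d k k := by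
  rw [sum_terms hk]
  calc ∑ j ∈ range (d + 1), a d k j ≤ ∑ _j ∈ range (d + 1), a d k k :=
        Finset.sum_le_sum fun j hj => le_max_term hk j (by simpa using Nat.lt_succ_iff.mp (Finset.mem_range.mp hj))
    _ = (d + 1) * a d k k := by rw [Finset.sum_const, Finset.card_range, smul_eq_mul]

lemma max_term_le_pow {d k : ℕ} (hk : k ≤ d) : a d k k ≤ d ^ d := by
  rw [sum_terms hk]
  exact Finset.single_le_sum (fun j _ => Nat.zero_le _) (Finset.mem_range.mpr (by omega))

/-- entropy formula -/
lemma ent_eq {d k : ℕ} (h0 : 0 < k) (h1 : k < d) :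
    (d : ℝ) * binEntropy ((k : ℝ) / d) =
      d * Real.log d - k * Real.log k - ((d : ℝ) - k) * Real.log ((d : ℝ) - k) := by
  have hd : (0 : ℝ) < d := by exact_mod_cast h0.trans h1
  have hk : (0 : ℝ) < k := by exact_mod_cast h0
  have hdk : (0 : ℝ) < (d : ℝ) - k := by
    have : (k : ℝ) < d := by exact_mod_cast h1
    linarith
  rw [binEntropy]
  have e1 : (1 : ℝ) - (k : ℝ) / d = ((d : ℝ) - k) / d := by field_simp
  rw [e1, Real.log_inv, Real.log_inv, Real.log_div hk.ne' hd.ne',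
    Real.log_div hdk.ne' hd.ne']
  field_simp
  ring

/-- key bound: `|log C(d,k) - d H(k/d)| ≤ log (d+1)` -/
lemma log_choose_bound {d k : ℕ} (hd : 0 < d) (hk : k ≤ d) :
    |Real.log (d.choose k) - (d : ℝ) * binEntropy ((k : ℝ) / d)| ≤ Real.log (d + 1) := by
  have hlog1 : (0 : ℝ) ≤ Real.log (d + 1) := Real.log_nonneg (by push_cast; linarith)
  rcases Nat.eq_zero_or_pos k with rfl | h0
  · simp [hlog1]
  rcases eq_or_lt_of_le hk with rfl | h1
  · have : (k : ℝ) / k = 1 := div_self (by positivity)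
    simp [this, hlog1]
  · -- 0 < k < d
    have hdR : (0 : ℝ) < d := by positivity
    have hkR : (0 : ℝ) < k := by exact_mod_cast h0
    have hdkN : 0 < d - k := by omega
    have hcast : ((d - k : ℕ) : ℝ) = (d : ℝ) - k := by
      push_cast [Nat.cast_sub hk]; ring
    have hdkR : (0 : ℝ) < (d : ℝ) - k := by
      rw [← hcast]; exact_mod_cast hdkN
    have hch : 0 < d.choose k := Nat.choose_pos hk
    have hchR : (0 : ℝ) < d.choose k := by exact_mod_cast hch
    -- real versions of the counting bounds
    have u1 : ((d.choose k : ℝ)) * (k : ℝ) ^ k * ((d : ℝ) - k) ^ (d - k) ≤ (d : ℝ) ^ d := by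
      rw [← hcast]
      exact_mod_cast max_term_le_pow hk
    have u2 : (d : ℝ) ^ d ≤ ((d : ℝ) + 1) * (((d.choose k : ℝ)) * (k : ℝ) ^ k * ((d : ℝ) - k) ^ (d - k)) := by
      rw [← hcast]
      exact_mod_cast pow_le_card_mul hk
    have hpos : (0 : ℝ) < ((d.choose k : ℝ)) * (k : ℝ) ^ k * ((d : ℝ) - k) ^ (d - k) := by
      positivity
    have hlogprod : Real.log (((d.choose k : ℝ)) * (k : ℝ) ^ k * ((d : ℝ) - k) ^ (d - k)) =
        Real.log (d.choose k) + k * Real.log k + ((d : ℝ) - k) * Real.log ((d : ℝ) - k) := by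
      rw [Real.log_mul (by positivity) (by positivity), Real.log_mul (by positivity) (by positivity),
        Real.log_pow, Real.log_pow]
      push_cast
      have : ((d - k : ℕ) : ℝ) = (d : ℝ) - k := hcast
      rw [this]
    have l1 : Real.log (d.choose k) + k * Real.log k + ((d : ℝ) - k) * Real.log ((d : ℝ) - k)
        ≤ d * Real.log d := by
      rw [← hlogprod, ← Real.log_pow]
      exact Real.log_le_log hpos u1
    have l2 : (d : ℝ) * Real.log d ≤ Real.log ((d : ℝ) + 1) +
        (Real.log (d.choose k) + k * Real.log k + ((d : ℝ) - k) * Real.log ((d : ℝ) - k)) := by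
      rw [← hlogprod, ← Real.log_pow, ← Real.log_mul (by positivity) hpos.ne']
      exact Real.log_le_log (by positivity) u2
    rw [ent_eq h0 h1, abs_le]
    constructor
    · have : Real.log ((d : ℝ) + 1) = Real.log ((d : ℕ) + 1 : ℝ) := by norm_num
      nlinarith [l2]
    · nlinarith [l1, hlog1]

lemma tendsto_log_succ_div : Tendsto (fun d : ℕ => Real.log (d + 1) / d) atTop (nhds 0) := by
  have h1 : Tendsto (fun d : ℕ => Real.log (d + 1) / ((d : ℝ) + 1)) atTop (nhds 0) := by
    have hlo : (fun d : ℕ => Real.log ((d : ℝ) + 1)) =o[atTop] (fun d : ℕ => (d : ℝ) + 1) := by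
      have := Real.isLittleO_log_id_atTop
      have hcomp : Tendsto (fun d : ℕ => (d : ℝ) + 1) atTop atTop :=
        tendsto_atTop_add_const_right _ _ tendsto_natCast_atTop_atTop
      simpa [Function.comp_def] using this.comp_tendsto hcomp
    exact hlo.tendsto_div_nhds_zero
  have h2 : Tendsto (fun d : ℕ => 2 * (Real.log (d + 1) / ((d : ℝ) + 1))) atTop (nhds 0) := by
    simpa using h1.const_mul 2
  apply squeeze_zero' ?_ ?_ h2
  · filter_upwards [eventually_ge_atTop 1] with d hd
    have hd1 : (1 : ℝ) ≤ d := by exact_mod_cast hd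
    exact div_nonneg (Real.log_nonneg (by linarith)) (by linarith)
  · filter_upwards [eventually_ge_atTop 1] with d hd
    have hd1 : (1 : ℝ) ≤ d := by exact_mod_cast hd
    have hlog : (0 : ℝ) ≤ Real.log (d + 1) := Real.log_nonneg (by linarith)
    have h2d : (0 : ℝ) < d := by linarith
    rw [show 2 * (Real.log (↑d + 1) / (↑d + 1)) = (2 * Real.log (↑d + 1)) / (↑d + 1) by ring,
      div_le_div_iff₀ h2d (by linarith)]
    nlinarith

end Stmt9Aux

open Stmt9Aux in
/-- `(1/d) log binomial(d, ⌈θd⌉) → H(θ)` uniformly in `θ ∈ [0,1]` as `d → ∞`, where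
`H(θ) = −θ log θ − (1−θ) log(1−θ)` is the natural entropy. -/
theorem stmt9 :
    TendstoUniformlyOn
      (fun (d : ℕ) (θ : ℝ) => (1 / (d : ℝ)) * Real.log (Nat.choose d ⌈θ * d⌉₊))
      (fun θ : ℝ => -θ * Real.log θ - (1 - θ) * Real.log (1 - θ))
      Filter.atTop (Set.Icc 0 1) := by
  have hHeq : ∀ θ : ℝ, -θ * Real.log θ - (1 - θ) * Real.log (1 - θ) = binEntropy θ := by
    intro θ
    rw [binEntropy, Real.log_inv, Real.log_inv]
    ring
  rw [Metric.tendstoUniformlyOn_iff]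
  intro ε hε
  -- uniform continuity of binEntropy on [0,1]
  have huc : UniformContinuousOn binEntropy (Set.Icc (0:ℝ) 1) :=
    isCompact_Icc.uniformContinuousOn_of_continuous binEntropy_continuous.continuousOn
  rw [Metric.uniformContinuousOn_iff] at huc
  obtain ⟨δ, hδ, hmod⟩ := huc (ε / 2) (by linarith)
  have hev1 : ∀ᶠ d : ℕ in atTop, Real.log (d + 1) / d < ε / 2 :=
    (tendsto_log_succ_div.eventually (gt_mem_nhds (by linarith)))
  have hev2 : ∀ᶠ d : ℕ in atTop, 1 / (d : ℝ) < δ := by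
    have := tendsto_one_div_atTop_nhds_zero_nat.eventually (gt_mem_nhds hδ)
    exact this
  filter_upwards [hev1, hev2, eventually_ge_atTop 1] with d hd1 hd2 hd3 θ hθ
  obtain ⟨hθ0, hθ1⟩ := hθ
  have hdR : (0 : ℝ) < d := by exact_mod_cast hd3
  set k : ℕ := ⌈θ * d⌉₊ with hk
  have hθd0 : (0:ℝ) ≤ θ * d := by positivity
  have hkd : k ≤ d := by
    rw [hk]
    exact Nat.ceil_le.mpr (by nlinarith)
  have hle : θ * d ≤ (k : ℝ) := by rw [hk]; exact Nat.le_ceil _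
  have hkle : θ ≤ (k : ℝ) / d := by
    rw [le_div_iff₀ hdR]; exact hle
  have hlt : (k : ℝ) < θ * d + 1 := by rw [hk]; exact Nat.ceil_lt_add_one hθd0
  have hkge : (k : ℝ) / d ≤ θ + 1 / d := by
    rw [div_le_iff₀ hdR]
    have he : (θ + 1 / d) * d = θ * d + 1 := by field_simp
    linarith
  have hx01 : (k : ℝ) / d ∈ Set.Icc (0:ℝ) 1 := by
    constructor
    · positivity
    · rw [div_le_one hdR]; exact_mod_cast hkd
  have hdist1 : dist ((k : ℝ) / d) θ < δ := by
    rw [Real.dist_eq, abs_of_nonneg (by linarith)]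
    calc (k : ℝ) / d - θ ≤ 1 / d := by linarith
      _ < δ := hd2
  have hH : dist (binEntropy θ) (binEntropy ((k : ℝ) / d)) < ε / 2 :=
    hmod θ ⟨hθ0, hθ1⟩ _ hx01 (by rwa [dist_comm])
  have hchoose := log_choose_bound (by omega : 0 < d) hkd
  have hmain : dist (binEntropy ((k : ℝ) / d)) ((1 / (d : ℝ)) * Real.log (Nat.choose d k)) < ε / 2 := by
    rw [Real.dist_eq]
    have : binEntropy ((k : ℝ) / d) - (1 / (d : ℝ)) * Real.log (Nat.choose d k)
        = -(1 / d) * (Real.log (Nat.choose d k) - (d : ℝ) * binEntropy ((k : ℝ) / d)) := by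
      field_simp
      ring
    rw [this, abs_mul, abs_neg, abs_of_nonneg (by positivity : (0:ℝ) ≤ 1 / (d:ℝ))]
    calc 1 / (d:ℝ) * |Real.log (Nat.choose d k) - (d : ℝ) * binEntropy ((k : ℝ) / d)|
        ≤ 1 / (d:ℝ) * Real.log (d + 1) := by
          apply mul_le_mul_of_nonneg_left hchoose (by positivity)
      _ = Real.log (d + 1) / d := by ring
      _ < ε / 2 := hd1
  have htri := dist_triangle (binEntropy θ) (binEntropy ((k : ℝ) / d))
    ((1 / (d : ℝ)) * Real.log (Nat.choose d k))
  have hgoal : dist (binEntropy θ) ((1 / (d : ℝ)) * Real.log (Nat.choose d ⌈θ * d⌉₊)) < ε := by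
    rw [← hk]; linarith
  simpa only [hHeq θ] using hgoal
end

section
/- Let f, g be proper convex functions on ℝ^d, Q orthogonal, z₀ = x₀ + Q y₀. Assume f is subdifferentiable at x₀ but does not attain its global minimum at x₀, and similarly g at y₀. If (x₀, y₀) is the unique minimizer of f(x) subject to g(y) ≤ g(y₀) and x + Qy = z₀, then there exists λ > 0 such that (x₀, y₀) is a global minimizer (not necessarily unique) of f(x) + λ g(y) subject to x + Qy = z₀. -/
/-- auxiliary strict convex combination inequality -/
lemma stmt14_aux {a b F₁ F₂ P₁ P₂ : ℝ} (ha : 0 ≤ a) (hb : 0 ≤ b) (hab : a + b = 1)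
    (h1 : F₁ < P₁) (h2 : F₂ < P₂) : a * F₁ + b * F₂ < a * P₁ + b * P₂ := by
  rcases ha.lt_or_eq with ha' | ha'
  · have := mul_lt_mul_of_pos_left h1 ha'
    have := mul_le_mul_of_nonneg_left h2.le hb
    linarith
  · have hb1 : b = 1 := by linarith
    rw [← ha', hb1]; simpa using h2

/-- Suppose `f` is subdifferentiable at `x₀` but does not attain its global minimum there,
and similarly for `g` at `y₀`. If `(x₀, y₀)` is the unique minimizer of the constrained
problem `min f(x) s.t. g(y) ≤ g(y₀), x + Qy = z₀`, then for some `λ > 0` the pair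
`(x₀, y₀)` is a global minimizer of the Lagrangian `f(x) + λ g(y)` over the constraint
`x + Qy = z₀`. -/
theorem stmt14 {d : ℕ} (f g : EuclideanSpace ℝ (Fin d) → ℝ)
    (hf : ConvexOn ℝ Set.univ f) (hg : ConvexOn ℝ Set.univ g)
    (Q : EuclideanSpace ℝ (Fin d) ≃ₗᵢ[ℝ] EuclideanSpace ℝ (Fin d))
    (x₀ y₀ z₀ : EuclideanSpace ℝ (Fin d)) (hz : z₀ = x₀ + Q y₀)
    (hfsub : ∃ u : EuclideanSpace ℝ (Fin d), ∀ v, f x₀ + (inner ℝ u (v - x₀) : ℝ) ≤ f v)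
    (hfmin : ∃ v, f v < f x₀)
    (hgsub : ∃ u : EuclideanSpace ℝ (Fin d), ∀ v, g y₀ + (inner ℝ u (v - y₀) : ℝ) ≤ g v)
    (hgmin : ∃ v, g v < g y₀)
    (huniq : ∀ x y : EuclideanSpace ℝ (Fin d),
      x + Q y = z₀ → g y ≤ g y₀ → (x, y) ≠ (x₀, y₀) → f x₀ < f x) :
    ∃ lam > (0:ℝ), ∀ x y : EuclideanSpace ℝ (Fin d), x + Q y = z₀ →
      f x₀ + lam * g y₀ ≤ f x + lam * g y := by
  classical
  have hzy : z₀ - Q y₀ = x₀ := by rw [hz]; abel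
  set C : Set (ℝ × ℝ) := {p | ∃ y : EuclideanSpace ℝ (Fin d),
    f (z₀ - Q y) - f x₀ < p.1 ∧ g y - g y₀ < p.2} with hCdef
  set K : Set (ℝ × ℝ) := {p | p.1 ≤ 0 ∧ p.2 ≤ 0} with hKdef
  -- convexity of C
  have hCconv : Convex ℝ C := by
    rintro p ⟨y₁, hp1, hp2⟩ q ⟨y₂, hq1, hq2⟩ a b ha hb hab
    refine ⟨a • y₁ + b • y₂, ?_, ?_⟩
    · have heq : z₀ - Q (a • y₁ + b • y₂) = a • (z₀ - Q y₁) + b • (z₀ - Q y₂) := by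
        have h1 : a • z₀ + b • z₀ = z₀ := by rw [← add_smul, hab, one_smul]
        rw [map_add, map_smul, map_smul, smul_sub, smul_sub]
        nth_rewrite 1 [← h1]
        abel
      have hcv := hf.2 (Set.mem_univ (z₀ - Q y₁)) (Set.mem_univ (z₀ - Q y₂)) ha hb hab
      rw [heq]
      have haux := stmt14_aux ha hb hab hp1 hq1
      have hfx : a * f x₀ + b * f x₀ = f x₀ := by rw [← add_mul, hab, one_mul]
      simp only [Prod.fst_add, Prod.smul_fst, smul_eq_mul] at *
      linarith
    · have hcv := hg.2 (Set.mem_univ y₁) (Set.mem_univ y₂) ha hb hab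
      have haux := stmt14_aux ha hb hab hp2 hq2
      have hgy : a * g y₀ + b * g y₀ = g y₀ := by rw [← add_mul, hab, one_mul]
      simp only [Prod.snd_add, Prod.smul_snd, smul_eq_mul] at *
      linarith
  -- openness of C
  have hCopen : IsOpen C := by
    have hCU : C = ⋃ y : EuclideanSpace ℝ (Fin d),
        ({p : ℝ × ℝ | f (z₀ - Q y) - f x₀ < p.1} ∩ {p : ℝ × ℝ | g y - g y₀ < p.2}) := by
      ext p
      simp only [hCdef, Set.mem_setOf_eq, Set.mem_iUnion, Set.mem_inter_iff]
    rw [hCU]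
    exact isOpen_iUnion fun y =>
      (isOpen_lt continuous_const continuous_fst).inter
        (isOpen_lt continuous_const continuous_snd)
  -- convexity of K
  have hKconv : Convex ℝ K := by
    rintro p ⟨hp1, hp2⟩ q ⟨hq1, hq2⟩ a b ha hb hab
    constructor <;>
      simp only [Prod.fst_add, Prod.snd_add, Prod.smul_fst, Prod.smul_snd, smul_eq_mul] <;>
      nlinarith
  -- disjointness
  have hdisj : Disjoint C K := by
    rw [Set.disjoint_left]
    rintro p ⟨y, hp1, hp2⟩ ⟨hk1, hk2⟩
    have hgle : g y ≤ g y₀ := by linarith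
    have hfx : f (z₀ - Q y) < f x₀ := by linarith
    have hsum : (z₀ - Q y) + Q y = z₀ := by abel
    rcases eq_or_ne ((z₀ - Q y, y)) ((x₀, y₀)) with heq | hne
    · have : z₀ - Q y = x₀ := (Prod.ext_iff.mp heq).1
      rw [this] at hfx; exact absurd hfx (lt_irrefl _)
    · exact absurd (huniq _ _ hsum hgle hne) (by linarith)
  obtain ⟨φ, u, hφC, hφK⟩ := geometric_hahn_banach_open hCconv hCopen hKconv hdisj
  -- coordinates of φ
  have hcoord : ∀ a b : ℝ, φ (a, b) = a * φ (1, 0) + b * φ (0, 1) := by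
    intro a b
    have h : ((a, b) : ℝ × ℝ) = a • ((1:ℝ), (0:ℝ)) + b • ((0:ℝ), (1:ℝ)) := by
      simp [Prod.ext_iff]
    rw [h, map_add, map_smul, map_smul, smul_eq_mul, smul_eq_mul]
  have hu0 : u ≤ 0 := by
    have h0 : ((0, 0) : ℝ × ℝ) ∈ K := ⟨le_rfl, le_rfl⟩
    have := hφK _ h0
    rw [hcoord] at this
    simpa using this
  set μ := -φ (1, 0) with hμdef
  set lam0 := -φ (0, 1) with hlamdef
  have hμ0 : 0 ≤ μ := by
    by_contra hcon
    push_neg at hcon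
    have hc : 0 < φ (1, 0) := by simp only [hμdef] at hcon; linarith
    have hmem : (((-((|u| + 1) / φ (1, 0))), 0) : ℝ × ℝ) ∈ K :=
      ⟨neg_nonpos.mpr (div_pos (by positivity) hc).le, le_rfl⟩
    have hKk := hφK _ hmem
    rw [hcoord, zero_mul, add_zero, neg_mul, div_mul_cancel₀ _ (ne_of_gt hc)] at hKk
    have := neg_abs_le u
    linarith
  have hl0 : 0 ≤ lam0 := by
    by_contra hcon
    push_neg at hcon
    have hc : 0 < φ (0, 1) := by simp only [hlamdef] at hcon; linarith
    have hmem : ((0, (-((|u| + 1) / φ (0, 1)))) : ℝ × ℝ) ∈ K :=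
      ⟨le_rfl, neg_nonpos.mpr (div_pos (by positivity) hc).le⟩
    have hKk := hφK _ hmem
    rw [hcoord, zero_mul, zero_add, neg_mul, div_mul_cancel₀ _ (ne_of_gt hc)] at hKk
    have := neg_abs_le u
    linarith
  -- strict positivity on C
  have hCneg : ∀ p ∈ C, 0 < μ * p.1 + lam0 * p.2 := by
    intro p hp
    have h1 := hφC p hp
    have h2 : φ p = p.1 * φ (1, 0) + p.2 * φ (0, 1) := hcoord p.1 p.2
    simp only [hμdef, hlamdef]
    nlinarith
  -- μ + lam0 > 0
  have hsum : 0 < μ + lam0 := by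
    have hmem : ((1, 1) : ℝ × ℝ) ∈ C := ⟨y₀, by rw [hzy]; norm_num, by norm_num⟩
    have h11 := hCneg _ hmem
    norm_num at h11
    linarith
  -- key inequality
  have key : ∀ y : EuclideanSpace ℝ (Fin d),
      0 ≤ μ * (f (z₀ - Q y) - f x₀) + lam0 * (g y - g y₀) := by
    intro y
    by_contra hcon
    push_neg at hcon
    set A := f (z₀ - Q y) - f x₀ with hA
    set B := g y - g y₀ with hB
    set ε := -(μ * A + lam0 * B) / (μ + lam0) with hε
    have hεpos : 0 < ε := div_pos (by linarith) hsum
    have hmem : ((A + ε, B + ε) : ℝ × ℝ) ∈ C := ⟨y, by simp [hA]; linarith, by simp [hB]; linarith⟩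
    have hpos := hCneg _ hmem
    have hεeq : ε * (μ + lam0) = -(μ * A + lam0 * B) := by
      rw [hε, div_mul_cancel₀ _ (ne_of_gt hsum)]
    have hexp : μ * (A + ε) + lam0 * (B + ε) = (μ * A + lam0 * B) + ε * (μ + lam0) := by ring
    simp only [Prod.fst, Prod.snd] at hpos
    linarith [hpos, hεeq, hexp]
  -- μ > 0
  have hμpos : 0 < μ := by
    rcases hμ0.lt_or_eq with h | h
    · exact h
    · exfalso
      obtain ⟨v, hv⟩ := hgmin
      have hk := key v
      have hl : 0 < lam0 := by linarith
      rw [← h, zero_mul, zero_add] at hk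
      have h2 : lam0 * (g v - g y₀) < 0 := mul_neg_of_pos_of_neg hl (by linarith)
      linarith
  -- lam0 > 0
  have hlpos : 0 < lam0 := by
    rcases hl0.lt_or_eq with h | h
    · exact h
    · exfalso
      obtain ⟨v, hv⟩ := hfmin
      have hk := key (Q.symm (z₀ - v))
      rw [Q.apply_symm_apply] at hk
      have : z₀ - (z₀ - v) = v := by abel
      rw [this, ← h, zero_mul, add_zero] at hk
      have h2 : μ * (f v - f x₀) < 0 := mul_neg_of_pos_of_neg hμpos (by linarith)
      linarith
  refine ⟨lam0 / μ, div_pos hlpos hμpos, ?_⟩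
  intro x y hxy
  have hx : x = z₀ - Q y := eq_sub_of_add_eq hxy
  have hk := key y
  rw [← hx] at hk
  have hμ' : lam0 / μ * μ = lam0 := div_mul_cancel₀ _ hμpos.ne'
  have h3 : 0 ≤ μ * ((f x - f x₀) + lam0 / μ * (g y - g y₀)) := by
    have hexp : μ * ((f x - f x₀) + lam0 / μ * (g y - g y₀)) =
        μ * (f x - f x₀) + (lam0 / μ * μ) * (g y - g y₀) := by ring
    rw [hexp, hμ']; linarith
  have h4 : (0:ℝ) ≤ (f x - f x₀) + lam0 / μ * (g y - g y₀) :=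
    le_of_mul_le_mul_left (by linarith) hμpos
  linarith
end
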